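/- Let H = (V,E,ω) be a connected weighted graph with n ≥ 2 vertices and let ℓ ∈ V. Let S be a set of sum-constrained book-embeddings of H such that (1) every member of S has ℓ as its first vertex, and (2) for any two distinct members L, L' of S, L does not up-down dominate L' and L is not up-down equivalent to L'. Then S contains at most n embeddings. -/

import Mathlib

namespace Schematic

/-- A 1-page book-embedding of `G`: vertices are linearly ordered via an injective
real-valued placement `f`, and no two edges cross. -/
def IsBE {V : Type*} (G : SimpleGraph V) (f : V → ℝ) : Prop :=
  Function.Injective f ∧
  ∀ a b c d : V, G.Adj a b → G.Adj c d → ¬ (f a < f c ∧ f c < f b ∧ f b < f d)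

/-- Edge `(u,v)` wraps around edge `(w,z)` (equivalently, `(w,z)` is nested into `(u,v)`),
where `(w,z)` is written in increasing order. -/
def Wraps {V : Type*} (G : SimpleGraph V) (f : V → ℝ) (u v w z : V) : Prop :=
  G.Adj u v ∧ G.Adj w z ∧ s(u, v) ≠ s(w, z) ∧
  f u ≤ f w ∧ f w < f z ∧ f z ≤ f v

/-- A sum-constrained book-embedding: for every edge `(u,v)` (with `u ≺ v`) and every
sequence of edges `(aᵢ,bᵢ)` distinct from `(u,v)` with
`u ⪯ a₀ ≺ b₀ ⪯ a₁ ≺ b₁ ⪯ ⋯ ⪯ v`, the weight of `(u,v)` exceeds the sum of the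
weights of the `(aᵢ,bᵢ)`. -/
def IsSumBE {V : Type*} (G : SimpleGraph V) (ω : V → V → ℝ) (f : V → ℝ) : Prop :=
  IsBE G f ∧
  ∀ u v : V, G.Adj u v → f u < f v →
    ∀ (k : ℕ) (a b : Fin k → V),
      (∀ i, G.Adj (a i) (b i)) →
      (∀ i, s(a i, b i) ≠ s(u, v)) →
      (∀ i, f u ≤ f (a i)) →
      (∀ i, f (a i) < f (b i)) →
      (∀ i, f (b i) ≤ f v) →
      (∀ i j, i < j → f (b i) ≤ f (a j)) →
      ∑ i, ω (a i) (b i) < ω u v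

open Classical in
/-- The total extension of the restriction of a book-embedding to the vertex set `W`:
the sum of the weights of the edges with both endpoints in `W` around which no edge
with both endpoints in `W` wraps. -/
noncomputable def totalExtOn {V : Type*} [Fintype V] (G : SimpleGraph V)
    (ω : V → V → ℝ) (f : V → ℝ) (W : Set V) : ℝ :=
  ∑ p : V × V,
    if G.Adj p.1 p.2 ∧ p.1 ∈ W ∧ p.2 ∈ W ∧ f p.1 < f p.2 ∧
        ¬ ∃ w z : V, w ∈ W ∧ z ∈ W ∧ Wraps G f w z p.1 p.2
    then ω p.1 p.2 else 0

/-- The total extension of a book-embedding: the sum of the weights of the outermost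
edges. -/
noncomputable def totalExt {V : Type*} [Fintype V] (G : SimpleGraph V)
    (ω : V → V → ℝ) (f : V → ℝ) : ℝ :=
  totalExtOn G ω f Set.univ

/-- The coordinate function of a canonical book-embedding given as a bijection
from the vertices to `Fin n`. -/
def coords {V : Type*} [Fintype V] (σ : V ≃ Fin (Fintype.card V)) (v : V) : ℝ :=
  ((σ v : ℕ) : ℝ)

/-- `α` is the free space of the book-embedding `f`: the weight of the lowest-right edge
`(u,v)` of the first vertex `u` minus the total extension of the restriction of the
embedding to `v` together with the vertices strictly between `u` and `v`. -/
def FreeSpaceIs {V : Type*} [Fintype V] (G : SimpleGraph V) (ω : V → V → ℝ)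
    (f : V → ℝ) (α : ℝ) : Prop :=
  ∃ u v : V, (∀ w, f u ≤ f w) ∧ G.Adj u v ∧ (∀ w, G.Adj u w → f v ≤ f w) ∧
    α = ω u v - totalExtOn G ω f {w | f u < f w ∧ f w ≤ f v}

/-- Two book-embeddings with the same first vertex are up-down equivalent if they have
the same total extension and the same free space. -/
def UpDownEquiv {V : Type*} [Fintype V] (G : SimpleGraph V) (ω : V → V → ℝ)
    (f f' : V → ℝ) : Prop :=
  totalExt G ω f = totalExt G ω f' ∧
  ∃ α : ℝ, FreeSpaceIs G ω f α ∧ FreeSpaceIs G ω f' α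

/-- `f` up-down dominates `f'`. -/
def UpDownDominates {V : Type*} [Fintype V] (G : SimpleGraph V) (ω : V → V → ℝ)
    (f f' : V → ℝ) : Prop :=
  ∃ α α' : ℝ, FreeSpaceIs G ω f α ∧ FreeSpaceIs G ω f' α' ∧
    totalExt G ω f ≤ totalExt G ω f' ∧ α' ≤ α ∧
    (totalExt G ω f < totalExt G ω f' ∨ α' < α)

section AuxiliaryLemmas

open scoped Classical

variable {V : Type*} {G : SimpleGraph V} {f f' : V → ℝ} {ω : V → V → ℝ}

/-- An outermost increasing edge: no edge of the graph wraps around it. -/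
def Outer (G : SimpleGraph V) (f : V → ℝ) (u v : V) : Prop :=
  G.Adj u v ∧ f u < f v ∧ ¬ ∃ w z : V, Wraps G f w z u v

lemma mono_of_step (g : ℕ → ℝ) (N : ℕ) (h : ∀ i < N, g i < g (i + 1)) :
    ∀ c d, c < d → d ≤ N → g c < g d := by
  intro c d
  induction d with
  | zero => omega
  | succ d ih =>
    intro hcd hdN
    rcases Nat.lt_succ_iff_lt_or_eq.mp hcd with h1 | h1
    · exact (ih h1 (by omega)).trans (h d (by omega))
    · subst h1; exact h c (by omega)

lemma cut_aux {r : V} (t : ℝ) :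
    ∀ {x : V} (_ : G.Walk x r), f x ≤ t → t < f r →
      ∃ a b, G.Adj a b ∧ f a ≤ t ∧ t < f b := by
  intro x p
  induction p with
  | nil => intro h1 h2; exact absurd h2 (not_lt.2 h1)
  | @cons x y _ h p ih =>
    intro h1 h2
    by_cases hy : f y ≤ t
    · exact ih hy h2
    · exact ⟨x, y, h, h1, lt_of_not_ge hy⟩

lemma cut (hc : G.Connected) {ℓ r : V} (t : ℝ) (h1 : f ℓ ≤ t) (h2 : t < f r) :
    ∃ a b, G.Adj a b ∧ f a ≤ t ∧ t < f b :=
  (hc.preconnected ℓ r).elim fun p => cut_aux t p h1 h2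

lemma nest (hBE : IsBE G f) {u v a b : V} (hout : Outer G f u v)
    (hadj : G.Adj a b) (h1 : f u ≤ f a) (h2 : f a < f v) (h3 : f a < f b) :
    f b ≤ f v := by
  by_contra hvb
  push_neg at hvb
  rcases eq_or_lt_of_le h1 with heq | hlt
  · have hau : a = u := hBE.1 heq.symm
    refine hout.2.2 ⟨a, b, hadj, hout.1, ?_, le_of_eq heq.symm, hout.2.1, le_of_lt hvb⟩
    intro hs
    rcases Sym2.eq_iff.mp hs with ⟨h4, h5⟩ | ⟨h4, h5⟩
    · subst h5; exact absurd rfl (ne_of_lt hvb)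
    · subst h4; exact absurd hout.2.1 (not_lt.2 (le_of_lt (h5 ▸ h3)))
  · exact hBE.2 u v a b hout.1 hadj ⟨hlt, h2, hvb⟩

lemma disj (hBE : IsBE G f) {u v u' v' : V} (h : Outer G f u v) (h' : Outer G f u' v')
    (h1 : f u ≤ f u') (h2 : f u' < f v) : u = u' ∧ v = v' := by
  have hv' : f v' ≤ f v := nest hBE h h'.1 h1 h2 h'.2.1
  by_cases hs : s(u, v) = s(u', v')
  · rcases Sym2.eq_iff.mp hs with ⟨h4, h5⟩ | ⟨h4, h5⟩
    · exact ⟨h4, h5⟩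
    · exfalso
      have hx : f u < f v := h.2.1
      rw [h4, h5] at hx
      exact absurd (hx.trans h'.2.1) (lt_irrefl _)
  · exact absurd ⟨u, v, h.1, h'.1, hs, h1, h'.2.1, hv'⟩ h'.2.2

lemma maxwrap [Fintype V] (hinj : Function.Injective f) {a b : V}
    (hadj : G.Adj a b) (hab : f a < f b) :
    ∃ u v, Outer G f u v ∧ f u ≤ f a ∧ f b ≤ f v := by
  set s : Finset (V × V) :=
    Finset.univ.filter (fun p : V × V => G.Adj p.1 p.2 ∧ f p.1 ≤ f a ∧ f b ≤ f p.2) with hs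
  have hne : s.Nonempty := ⟨(a, b), by simp [hs, hadj]⟩
  obtain ⟨p, hp, hmax⟩ := s.exists_max_image (fun p => f p.2 - f p.1) hne
  rw [hs, Finset.mem_filter] at hp
  obtain ⟨-, hp1, hp2, hp3⟩ := hp
  have hlt : f p.1 < f p.2 := lt_of_le_of_lt hp2 (lt_of_lt_of_le hab hp3)
  refine ⟨p.1, p.2, ⟨hp1, hlt, ?_⟩, hp2, hp3⟩
  rintro ⟨w, z, hwz, -, hsne, hw1, -, hw2⟩
  have hwzs : (w, z) ∈ s := by
    rw [hs, Finset.mem_filter]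
    exact ⟨Finset.mem_univ _, hwz, le_trans hw1 hp2, le_trans hp3 hw2⟩
  have hspan := hmax (w, z) hwzs
  simp only at hspan
  have hor : f w < f p.1 ∨ f p.2 < f z := by
    by_contra hcon
    push_neg at hcon
    have h1 : f w = f p.1 := le_antisymm hw1 hcon.1
    have h2 : f z = f p.2 := le_antisymm hcon.2 hw2
    exact hsne (by rw [hinj h1, hinj h2])
  rcases hor with h | h <;> linarith

lemma next_exists [Fintype V] (hBE : IsBE G f) (hc : G.Connected) {ℓ r x : V}
    (hℓ : ∀ w, f ℓ ≤ f w)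
    (hgood : x = ℓ ∨ ∃ u, Outer G f u x ∧ f u < f x)
    (hx : f x < f r) : ∃ v, Outer G f x v ∧ f x < f v := by
  obtain ⟨a, b, hab, ha, hb⟩ := cut hc (f x) (hℓ x) hx
  obtain ⟨u, v, huv, hua, hbv⟩ := maxwrap hBE.1 hab (lt_of_le_of_lt ha hb)
  have hufx : f u ≤ f x := le_trans hua ha
  have hxfv : f x < f v := lt_of_lt_of_le hb hbv
  have hux : u = x := by
    rcases hgood with rfl | ⟨u', hu', hu'x⟩
    · exact hBE.1 (le_antisymm hufx (hℓ u))
    · rcases eq_or_lt_of_le hufx with heq | hlt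
      · exact hBE.1 heq
      · exfalso
        rcases le_or_gt (f u) (f u') with h | h
        · have hd := disj hBE huv hu' h (lt_trans hu'x hxfv)
          exact absurd (hd.2 ▸ hxfv) (lt_irrefl _)
        · have hd := disj hBE hu' huv (le_of_lt h) hlt
          exact absurd (hd.2 ▸ hxfv) (by rw [← hd.2]; exact lt_irrefl _)
  exact ⟨v, hux ▸ huv, hux ▸ hxfv⟩

lemma exists_chain [Fintype V] (hBE : IsBE G f) (hc : G.Connected) {ℓ r : V}
    (hℓ : ∀ w, f ℓ ≤ f w) (hr : ∀ w, f w ≤ f r) :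
    ∃ (K : ℕ) (x : ℕ → V), x 0 = ℓ ∧ x K = r ∧
      (∀ i < K, Outer G f (x i) (x (i + 1))) ∧
      (∀ u v, Outer G f u v → ∃ i < K, u = x i ∧ v = x (i + 1)) := by
  set nxt : V → V := fun y =>
    if h : ∃ v, Outer G f y v ∧ f y < f v then h.choose else y with hnxt
  set x : ℕ → V := fun i => nxt^[i] ℓ with hx
  have hx0 : x 0 = ℓ := rfl
  have hxs : ∀ i, x (i + 1) = nxt (x i) := by
    intro i; rw [hx]; exact Function.iterate_succ_apply' nxt i ℓ
  have hgood : ∀ i, x i = ℓ ∨ ∃ u, Outer G f u (x i) ∧ f u < f (x i) := by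
    intro i
    induction i with
    | zero => exact Or.inl hx0
    | succ i ih =>
      rw [hxs i, hnxt]
      by_cases h : ∃ v, Outer G f (x i) v ∧ f (x i) < f v
      · simp only [h, dif_pos]
        exact Or.inr ⟨x i, h.choose_spec⟩
      · simp only [h, dif_neg, not_false_iff]
        exact ih
  have hstep : ∀ i, x i ≠ r → Outer G f (x i) (x (i + 1)) ∧ f (x i) < f (x (i + 1)) := by
    intro i hir
    have hfx : f (x i) < f r := lt_of_le_of_ne (hr _) (fun h => hir (hBE.1 h))
    have h : ∃ v, Outer G f (x i) v ∧ f (x i) < f v := next_exists hBE hc hℓ (hgood i) hfx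
    rw [hxs i, hnxt]
    simp only [h, dif_pos]
    exact h.choose_spec
  have hterm : ∃ i, x i = r := by
    by_contra hcon
    push_neg at hcon
    have hmono : StrictMono (fun i => f (x i)) :=
      strictMono_nat_of_lt_succ fun i => (hstep i (hcon i)).2
    have hxinj : Function.Injective x := fun i j h => hmono.injective (by rw [h])
    obtain ⟨i, j, hij, hxij⟩ := Finite.exists_ne_map_eq_of_infinite x
    exact hij (hxinj hxij)
  have hxK : x (Nat.find hterm) = r := Nat.find_spec hterm
  have hout : ∀ i < Nat.find hterm, Outer G f (x i) (x (i + 1)) := by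
    intro i hi
    exact (hstep i (Nat.find_min hterm hi)).1
  have hmono : ∀ c d, c < d → d ≤ Nat.find hterm → f (x c) < f (x d) :=
    mono_of_step (fun i => f (x i)) (Nat.find hterm) (fun i hi => (hout i hi).2.1)
  refine ⟨Nat.find hterm, x, hx0, hxK, hout, ?_⟩
  intro u v huv
  have h0s : 0 ∈ (Finset.range (Nat.find hterm + 1)).filter (fun i => f (x i) ≤ f u) := by
    rw [Finset.mem_filter, Finset.mem_range]
    exact ⟨by omega, hx0 ▸ hℓ u⟩
  have hsne : ((Finset.range (Nat.find hterm + 1)).filter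
      (fun i => f (x i) ≤ f u)).Nonempty := ⟨0, h0s⟩
  set i := (((Finset.range (Nat.find hterm + 1)).filter
      (fun i => f (x i) ≤ f u))).max' hsne with hi
  have his : i ∈ (Finset.range (Nat.find hterm + 1)).filter (fun i => f (x i) ≤ f u) :=
    Finset.max'_mem _ hsne
  rw [Finset.mem_filter, Finset.mem_range] at his
  have hiK : i < Nat.find hterm := by
    rcases Nat.lt_succ_iff_lt_or_eq.mp his.1 with h | h
    · exact h
    · exfalso
      have hvr : f u < f (x (Nat.find hterm)) := by
        rw [hxK]
        exact lt_of_lt_of_le huv.2.1 (hr v)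
      rw [← h] at hvr
      exact absurd his.2 (not_le.2 hvr)
  have hnext : f u < f (x (i + 1)) := by
    by_contra hcon
    push_neg at hcon
    have hmem : i + 1 ∈ (Finset.range (Nat.find hterm + 1)).filter
        (fun i => f (x i) ≤ f u) := by
      rw [Finset.mem_filter, Finset.mem_range]
      exact ⟨by omega, hcon⟩
    have hle := Finset.le_max' _ _ hmem
    rw [← hi] at hle
    omega
  obtain ⟨h1, h2⟩ := disj hBE (hout i hiK) huv his.2 hnext
  exact ⟨i, hiK, h1.symm, h2.symm⟩

lemma totalExt_eq [Fintype V] (G : SimpleGraph V) (ω : V → V → ℝ) (f : V → ℝ) :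
    totalExt G ω f =
      ∑ p ∈ Finset.univ.filter (fun p : V × V => Outer G f p.1 p.2), ω p.1 p.2 := by
  rw [totalExt, totalExtOn, Finset.sum_filter]
  apply Finset.sum_congr rfl
  intro p _
  simp [Outer, Set.mem_univ]

lemma totalExt_chain [Fintype V] (hinj : Function.Injective f) (K : ℕ) (x : ℕ → V)
    (hout : ∀ i < K, Outer G f (x i) (x (i + 1)))
    (hall : ∀ u v, Outer G f u v → ∃ i < K, u = x i ∧ v = x (i + 1)) :
    totalExt G ω f = ∑ i ∈ Finset.range K, ω (x i) (x (i + 1)) := by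
  rw [totalExt_eq]
  have hmono : ∀ c d, c < d → d ≤ K → f (x c) < f (x d) :=
    mono_of_step (fun i => f (x i)) K (fun i hi => (hout i hi).2.1)
  have hset : Finset.univ.filter (fun p : V × V => Outer G f p.1 p.2) =
      (Finset.range K).image (fun i => (x i, x (i + 1))) := by
    ext p
    simp only [Finset.mem_filter, Finset.mem_univ, true_and, Finset.mem_image,
      Finset.mem_range]
    constructor
    · intro h
      obtain ⟨i, hi, h1, h2⟩ := hall p.1 p.2 h
      exact ⟨i, hi, by rw [← h1, ← h2]⟩
    · rintro ⟨i, hi, rfl⟩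
      exact hout i hi
  rw [hset, Finset.sum_image]
  intro i hi j hj hij
  rw [Finset.mem_coe, Finset.mem_range] at hi hj
  have h1 : x i = x j := congrArg Prod.fst hij
  by_contra hne
  rcases Nat.lt_or_ge i j with h | h
  · have hx := hmono i j h (by omega)
    rw [h1] at hx
    exact absurd hx (lt_irrefl _)
  · have hx := hmono j i (by omega) (by omega)
    rw [h1] at hx
    exact absurd hx (lt_irrefl _)

lemma path_mono (hBE : IsBE G f) {ℓ r : V} (hℓ : ∀ w, f ℓ ≤ f w) (hr : ∀ w, f w ≤ f r)
    {N : ℕ} {z : ℕ → V} (h0 : z 0 = ℓ) (hN : z N = r)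
    (hadj : ∀ j < N, G.Adj (z j) (z (j + 1)))
    (hinj : ∀ ⦃j j' : ℕ⦄, j ≤ N → j' ≤ N → z j = z j' → j = j') :
    ∀ j < N, f (z j) < f (z (j + 1)) := by
  by_contra hcon
  push_neg at hcon
  have hcon' : ∃ j, j < N ∧ f (z (j + 1)) ≤ f (z j) := hcon
  obtain ⟨j₀, ⟨hj₀N, hj₀le⟩, hj₀min⟩ :
      ∃ j₀, (j₀ < N ∧ f (z (j₀ + 1)) ≤ f (z j₀)) ∧
        ∀ c < j₀, ¬ (c < N ∧ f (z (c + 1)) ≤ f (z c)) :=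
    ⟨Nat.find hcon', Nat.find_spec hcon', fun c hc => Nat.find_min hcon' hc⟩
  have hj₀lt : f (z (j₀ + 1)) < f (z j₀) := by
    rcases eq_or_lt_of_le hj₀le with h | h
    · exact absurd (hinj (by omega) (by omega) (hBE.1 h)) (by omega)
    · exact h
  have hprefix : ∀ c < j₀, f (z c) < f (z (c + 1))  := by
    intro c hc
    have h1 := hj₀min c hc
    push_neg at h1
    exact h1 (by omega)
  have hpm : ∀ c d, c < d → d ≤ j₀ → f (z c) < f (z d) :=
    mono_of_step (fun i => f (z i)) j₀ hprefix
  have hj₀pos : 0 < j₀ := by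
    rcases Nat.eq_zero_or_pos j₀ with h | h
    · exfalso
      rw [h, h0] at hj₀lt
      exact absurd (hℓ (z 1)) (not_le.2 hj₀lt)
    · exact h
  have hjr : f (z j₀) < f r := by
    have hne : z j₀ ≠ r := by
      intro h
      have := hinj (show j₀ ≤ N by omega) (le_refl N) (h.trans hN.symm)
      omega
    exact lt_of_le_of_ne (hr _) (fun h => hne (hBE.1 h))
  have hexa : ∃ a, j₀ < a ∧ a ≤ N ∧ f (z j₀) < f (z a) :=
    ⟨N, by omega, le_refl N, hN ▸ hjr⟩
  obtain ⟨a, ⟨haj, haN, hfa⟩, hamin⟩ :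
      ∃ a, (j₀ < a ∧ a ≤ N ∧ f (z j₀) < f (z a)) ∧
        ∀ d < a, ¬ (j₀ < d ∧ d ≤ N ∧ f (z j₀) < f (z d)) :=
    ⟨Nat.find hexa, Nat.find_spec hexa, fun d hd => Nat.find_min hexa hd⟩
  have ha2 : j₀ + 2 ≤ a := by
    rcases Nat.lt_or_ge a (j₀ + 2) with h | h
    · exfalso
      have heq : a = j₀ + 1 := by omega
      rw [heq] at hfa
      exact absurd hfa (not_lt.2 hj₀le)
    · exact h
  set d := a - 1 with hd
  have hda : a = d + 1 := by omega
  have hfd : f (z d) < f (z j₀) := by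
    have h1 := hamin d (by omega)
    push_neg at h1
    have h2 : ¬ f (z j₀) < f (z d) := by
      intro h
      exact absurd h (by push_neg; exact h1 (by omega) (by omega))
    rcases eq_or_lt_of_le (not_lt.1 h2) with h | h
    · exfalso
      have := hinj (show d ≤ N by omega) (show j₀ ≤ N by omega) (hBE.1 h)
      omega
    · exact h
  have hdne : z d ≠ ℓ := by
    intro h
    have := hinj (show d ≤ N by omega) (show 0 ≤ N by omega) (h.trans h0.symm)
    omega
  have hfd0 : f (z 0) < f (z d) := by
    rw [h0]
    exact lt_of_le_of_ne (hℓ _) (fun h => hdne (hBE.1 h).symm)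
  have hsne : ((Finset.range j₀).filter (fun c => f (z c) < f (z d))).Nonempty := by
    refine ⟨0, ?_⟩
    rw [Finset.mem_filter, Finset.mem_range]
    exact ⟨hj₀pos, hfd0⟩
  set c := ((Finset.range j₀).filter (fun c => f (z c) < f (z d))).max' hsne with hc
  have hcs : c ∈ (Finset.range j₀).filter (fun c => f (z c) < f (z d)) :=
    Finset.max'_mem _ hsne
  rw [Finset.mem_filter, Finset.mem_range] at hcs
  have hcd : f (z d) < f (z (c + 1)) := by
    rcases Nat.lt_or_ge (c + 1) j₀ with h | h
    · by_contra hcon2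
      push_neg at hcon2
      rcases eq_or_lt_of_le hcon2 with h2 | h2
      · have := hinj (show c + 1 ≤ N by omega) (show d ≤ N by omega) (hBE.1 h2)
        omega
      · have hmem : c + 1 ∈ (Finset.range j₀).filter (fun c => f (z c) < f (z d)) := by
          rw [Finset.mem_filter, Finset.mem_range]
          exact ⟨h, h2⟩
        have hle := Finset.le_max' _ _ hmem
        rw [← hc] at hle
        omega
    · have heq : c + 1 = j₀ := by omega
      rw [heq]
      exact hfd
  have hc1j : f (z (c + 1)) ≤ f (z j₀) := by
    rcases Nat.lt_or_ge (c + 1) j₀ with h | h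
    · exact le_of_lt (hpm _ _ h (le_refl _))
    · have heq : c + 1 = j₀ := by omega
      rw [heq]
  have hadj1 : G.Adj (z c) (z (c + 1)) := hadj c (by omega)
  have hadj2 : G.Adj (z d) (z a) := by
    rw [hda]
    exact hadj d (by omega)
  exact hBE.2 (z c) (z (c + 1)) (z d) (z a) hadj1 hadj2
    ⟨hcs.2, hcd, lt_of_le_of_lt hc1j hfa⟩

end AuxiliaryLemmas

section MainLemmas

open scoped Classical

variable {V : Type*} {G : SimpleGraph V} {f f' : V → ℝ} {ω : V → V → ℝ}

lemma tau_le [Fintype V] (hf : IsSumBE G ω f) (hf' : IsSumBE G ω f') (hc : G.Connected)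
    {ℓ r : V} (hℓ : ∀ w, f ℓ ≤ f w) (hr : ∀ w, f w ≤ f r)
    (hℓ' : ∀ w, f' ℓ ≤ f' w) (hr' : ∀ w, f' w ≤ f' r) :
    totalExt G ω f' ≤ totalExt G ω f := by
  obtain ⟨K, x, hx0, hxK, hxout, hxall⟩ := exists_chain hf.1 hc hℓ hr
  obtain ⟨K', z, hz0, hzK, hzout, hzall⟩ := exists_chain hf'.1 hc hℓ' hr'
  rw [totalExt_chain hf.1.1 K x hxout hxall, totalExt_chain hf'.1.1 K' z hzout hzall]
  have hzadj : ∀ j < K', G.Adj (z j) (z (j + 1)) := fun j hj => (hzout j hj).1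
  have hzm' : ∀ c d, c < d → d ≤ K' → f' (z c) < f' (z d) :=
    mono_of_step (fun j => f' (z j)) K' (fun j hj => (hzout j hj).2.1)
  have hzinj : ∀ ⦃j j' : ℕ⦄, j ≤ K' → j' ≤ K' → z j = z j' → j = j' := by
    intro j j' hj hj' heq
    by_contra hne
    rcases Nat.lt_or_ge j j' with h | h
    · have hx := hzm' j j' h hj'
      rw [heq] at hx
      exact lt_irrefl _ hx
    · have hx := hzm' j' j (by omega) hj
      rw [heq] at hx
      exact lt_irrefl _ hx
  have hm3 : ∀ j < K', f (z j) < f (z (j + 1)) :=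
    path_mono hf.1 hℓ hr hz0 hzK hzadj hzinj
  have monoz : ∀ c d, c < d → d ≤ K' → f (z c) < f (z d) :=
    mono_of_step (fun j => f (z j)) K' hm3
  have monozle : ∀ c d, c ≤ d → d ≤ K' → f (z c) ≤ f (z d) := by
    intro c d h hd
    rcases eq_or_lt_of_le h with rfl | h
    · exact le_refl _
    · exact le_of_lt (monoz c d h hd)
  have hassign : ∀ j, j < K' →
      ∃ i, i < K ∧ f (x i) ≤ f (z j) ∧ f (z (j + 1)) ≤ f (x (i + 1)) := by
    intro j hj
    have hzjr : f (z j) < f (x K) := by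
      rw [hxK]
      have hne : z j ≠ r := fun h => by
        have := hzinj (le_of_lt hj) (le_refl K') (h.trans hzK.symm)
        omega
      exact lt_of_le_of_ne (hr _) (fun h => hne (hf.1.1 h))
    have hsne : ((Finset.range (K + 1)).filter (fun i => f (x i) ≤ f (z j))).Nonempty := by
      refine ⟨0, ?_⟩
      rw [Finset.mem_filter, Finset.mem_range]
      exact ⟨by omega, hx0 ▸ hℓ (z j)⟩
    set i := ((Finset.range (K + 1)).filter (fun i => f (x i) ≤ f (z j))).max' hsne with hi
    have his : i ∈ (Finset.range (K + 1)).filter (fun i => f (x i) ≤ f (z j)) :=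
      Finset.max'_mem _ hsne
    rw [Finset.mem_filter, Finset.mem_range] at his
    have hiK : i < K := by
      rcases Nat.lt_succ_iff_lt_or_eq.mp his.1 with h | h
      · exact h
      · exfalso
        have h2 := his.2
        rw [h] at h2
        exact absurd h2 (not_le.2 hzjr)
    have hnext : f (z j) < f (x (i + 1)) := by
      by_contra hcon
      push_neg at hcon
      have hmem : i + 1 ∈ (Finset.range (K + 1)).filter (fun i => f (x i) ≤ f (z j)) := by
        rw [Finset.mem_filter, Finset.mem_range]
        exact ⟨by omega, hcon⟩
      have hle := Finset.le_max' _ _ hmem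
      rw [← hi] at hle
      omega
    exact ⟨i, hiK, his.2, nest hf.1 (hxout i hiK) (hzadj j hj) his.2 hnext (hm3 j hj)⟩
  set φ : ℕ → ℕ := fun j => if h : j < K' then (hassign j h).choose else 0 with hφ
  have hφ1 : ∀ j, j < K' → φ j < K := by
    intro j hj
    rw [hφ]
    simp only [hj, dif_pos]
    exact (hassign j hj).choose_spec.1
  have hφ2 : ∀ j, j < K' → f (x (φ j)) ≤ f (z j) := by
    intro j hj
    rw [hφ]
    simp only [hj, dif_pos]
    exact (hassign j hj).choose_spec.2.1
  have hφ3 : ∀ j, j < K' → f (z (j + 1)) ≤ f (x (φ j + 1)) := by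
    intro j hj
    rw [hφ]
    simp only [hj, dif_pos]
    exact (hassign j hj).choose_spec.2.2
  have hmap : ∀ j ∈ Finset.range K', φ j ∈ Finset.range K := by
    intro j hj
    rw [Finset.mem_range] at hj ⊢
    exact hφ1 j hj
  rw [← Finset.sum_fiberwise_of_maps_to hmap (fun j => ω (z j) (z (j + 1)))]
  apply Finset.sum_le_sum
  intro i hi
  rw [Finset.mem_range] at hi
  set T := (Finset.range K').filter (fun j => φ j = i) with hT
  have hTmem : ∀ j ∈ T, j < K' ∧ φ j = i := by
    intro j hj
    rw [hT, Finset.mem_filter, Finset.mem_range] at hj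
    exact hj
  by_cases hA : ∃ j ∈ T, z j = x i ∧ z (j + 1) = x (i + 1)
  · obtain ⟨j, hjT, hj1, hj2⟩ := hA
    have hTj : T = {j} := by
      apply Finset.eq_singleton_iff_unique_mem.mpr
      refine ⟨hjT, ?_⟩
      intro j' hj'T
      by_contra hne
      obtain ⟨hj'K, hj'φ⟩ := hTmem j' hj'T
      obtain ⟨hjK, -⟩ := hTmem j hjT
      have p1 : f (x i) ≤ f (z j') := hj'φ ▸ hφ2 j' hj'K
      have p2 : f (z (j' + 1)) ≤ f (x (i + 1)) := hj'φ ▸ hφ3 j' hj'K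
      rcases Nat.lt_or_ge j' j with h | h
      · have h1 : f (z (j' + 1)) ≤ f (z j) := monozle (j' + 1) j (by omega) (by omega)
        rw [hj1] at h1
        have h2 := lt_of_lt_of_le (hm3 j' hj'K) h1
        exact absurd p1 (not_le.2 h2)
      · have hlt : j < j' := by omega
        have h1 : f (z (j + 1)) ≤ f (z j') := monozle (j + 1) j' (by omega) (by omega)
        rw [hj2] at h1
        have h2 := lt_of_le_of_lt h1 (hm3 j' hj'K)
        exact absurd p2 (not_le.2 h2)
    rw [hTj, Finset.sum_singleton, hj1, hj2]
  · push_neg at hA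
    set e := T.orderIsoOfFin rfl with he
    have hjp : ∀ p : Fin T.card, ((e p : ℕ) ∈ T) := fun p => (e p).2
    have hcard := hf.2 (x i) (x (i + 1)) (hxout i hi).1 (hxout i hi).2.1 T.card
      (fun p => z (e p : ℕ)) (fun p => z ((e p : ℕ) + 1))
      (fun p => hzadj _ (hTmem _ (hjp p)).1)
      (by
        intro p hs
        have hjK := (hTmem _ (hjp p)).1
        rcases Sym2.eq_iff.mp hs with ⟨h1, h2⟩ | ⟨h1, h2⟩
        · exact hA _ (hjp p) h1 h2
        · have h1' : z (e p : ℕ) = x (i + 1) := h1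
          have h2' : z ((e p : ℕ) + 1) = x i := h2
          have hx := hm3 _ hjK
          rw [h1', h2'] at hx
          exact absurd (hxout i hi).2.1 (not_lt.2 (le_of_lt hx)))
      (fun p => by
        have h := hTmem _ (hjp p)
        exact h.2 ▸ hφ2 _ h.1)
      (fun p => hm3 _ (hTmem _ (hjp p)).1)
      (fun p => by
        have h := hTmem _ (hjp p)
        exact h.2 ▸ hφ3 _ h.1)
      (by
        intro p q hpq
        have hlt : (e p : ℕ) < (e q : ℕ) := by
          have := e.strictMono hpq
          exact_mod_cast this
        exact monozle _ _ (by omega) (by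
          have := (hTmem _ (hjp q)).1
          omega))
    have hsum : ∑ p : Fin T.card, ω (z (e p : ℕ)) (z ((e p : ℕ) + 1)) =
        ∑ j ∈ T, ω (z j) (z (j + 1)) := by
      rw [← Finset.sum_coe_sort T (fun j => ω (z j) (z (j + 1)))]
      exact Equiv.sum_comp e.toEquiv (fun j : T => ω (z (j : ℕ)) (z ((j : ℕ) + 1)))
    rw [← hsum]
    exact le_of_lt hcard

lemma exists_adj [Fintype V] (hc : G.Connected) (hn : 1 < Fintype.card V) (u : V) :
    ∃ v, G.Adj u v := by
  obtain ⟨w, hw⟩ := Fintype.exists_ne_of_one_lt_card hn u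
  obtain ⟨p⟩ := hc.preconnected u w
  cases p with
  | nil => exact absurd rfl hw
  | cons h _ => exact ⟨_, h⟩

lemma freeSpace_exists [Fintype V] (hc : G.Connected) (hn : 2 ≤ Fintype.card V)
    (ω : V → V → ℝ) {ℓ : V} (hℓ : ∀ w, f ℓ ≤ f w) :
    ∃ α, FreeSpaceIs G ω f α := by
  obtain ⟨c, hcadj⟩ := exists_adj hc (by omega) ℓ
  have hsne : (Finset.univ.filter (fun w => G.Adj ℓ w)).Nonempty :=
    ⟨c, by simp [hcadj]⟩
  obtain ⟨v, hv, hvmin⟩ := Finset.exists_min_image _ f hsne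
  rw [Finset.mem_filter] at hv
  exact ⟨_, ℓ, v, hℓ, hv.2, fun w hw => hvmin w (by simp [hw]), rfl⟩

end MainLemmas

/-- a family of sum-constrained book-embeddings of a connected weighted
graph on `n ≥ 2` vertices, all with the same first vertex `ℓ`, which are pairwise
non-dominating and non-equivalent in the up-down sense, has at most `n` members. -/
theorem card_le_of_pairwise_ud_incomparable {V : Type*} [Fintype V]
    (G : SimpleGraph V) (ω : V → V → ℝ)
    (hsym : ∀ u v, ω u v = ω v u)
    (hpos : ∀ u v, G.Adj u v → 0 < ω u v)
    (hconn : G.Connected) (hn : 2 ≤ Fintype.card V) (ℓ : V)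
    (S : Finset (V ≃ Fin (Fintype.card V)))
    (hbe : ∀ σ ∈ S, IsSumBE G ω (coords σ))
    (hfirst : ∀ σ ∈ S, ∀ v : V, coords σ ℓ ≤ coords σ v)
    (hpair : ∀ σ ∈ S, ∀ σ' ∈ S, σ ≠ σ' →
      ¬ UpDownDominates G ω (coords σ) (coords σ') ∧
      ¬ UpDownEquiv G ω (coords σ) (coords σ')) :
    S.card ≤ Fintype.card V := by
  classical
  have hn0 : 0 < Fintype.card V := by omega
  let rv : (V ≃ Fin (Fintype.card V)) → V :=
    fun σ => σ.symm ⟨Fintype.card V - 1, by omega⟩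
  have hrmax : ∀ (σ : V ≃ Fin (Fintype.card V)) (w : V),
      coords σ w ≤ coords σ (rv σ) := by
    intro σ w
    show ((σ w : ℕ) : ℝ) ≤ ((σ (rv σ) : ℕ) : ℝ)
    have h1 : σ (rv σ) = ⟨Fintype.card V - 1, by omega⟩ := Equiv.apply_symm_apply σ _
    rw [h1]
    have h2 : (σ w : ℕ) ≤ Fintype.card V - 1 := by
      have := (σ w).isLt
      omega
    exact_mod_cast h2
  have htau : ∀ σ ∈ S, ∀ σ' ∈ S,
      totalExt G ω (coords σ) = totalExt G ω (coords σ') → σ = σ' := by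
    intro σ hσ σ' hσ' hττ
    by_contra hne
    obtain ⟨α, hα⟩ := freeSpace_exists hconn hn ω (hfirst σ hσ)
    obtain ⟨α', hα'⟩ := freeSpace_exists hconn hn ω (hfirst σ' hσ')
    rcases lt_trichotomy α α' with h | h | h
    · exact (hpair σ' hσ' σ hσ (Ne.symm hne)).1
        ⟨α', α, hα', hα, le_of_eq hττ.symm, le_of_lt h, Or.inr h⟩
    · exact (hpair σ hσ σ' hσ' hne).2 ⟨hττ, α, hα, by rw [h]; exact hα'⟩
    · exact (hpair σ hσ σ' hσ' hne).1
        ⟨α, α', hα, hα', le_of_eq hττ, le_of_lt h, Or.inr h⟩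
  have hinjOn : Set.InjOn rv ↑S := by
    intro σ hσ σ' hσ' heq
    rw [Finset.mem_coe] at hσ hσ'
    apply htau σ hσ σ' hσ'
    apply le_antisymm
    · exact tau_le (hbe σ' hσ') (hbe σ hσ) hconn (hfirst σ' hσ')
        (fun w => by rw [heq]; exact hrmax σ' w) (hfirst σ hσ) (hrmax σ)
    · exact tau_le (hbe σ hσ) (hbe σ' hσ') hconn (hfirst σ hσ) (hrmax σ)
        (hfirst σ' hσ') (fun w => by rw [heq]; exact hrmax σ' w)
  have hcard := Finset.card_le_card_of_injOn rv (fun σ _ => Finset.mem_univ _) hinjOn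
  rw [Finset.card_univ] at hcard
  exact hcard


end Schematic
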